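/- Let P = Q_1 ⊕ ⋯ ⊕ Q_k be a ladder (each Q_i an antichain of size 1 or 2), with B_i = M^{Q_i} (so B_i = (x_{a_i}) if |Q_i|=1, and B_i the 2×2 matrix with rows (x_{b_i}, x_{a_i}), (x_{b_i}, x_{a_i}) if Q_i = {a_i, b_i}). Then M^P = Σ_{t=1}^k I_{|Q_1|} ⊗ ⋯ ⊗ I_{|Q_{t-1}|} ⊗ B_t ⊗ J_{|Q_{t+1}|} ⊗ ⋯ ⊗ J_{|Q_k|}, where J_m denotes the m×m anti-diagonal matrix of ones. -/

import Mathlib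

open Matrix Kronecker
open scoped Classical

namespace PromoMC

/-- A listing of the elements of a finite set `α`. -/
abbrev Listing (α : Type*) [Fintype α] := Fin (Fintype.card α) ≃ α

/-- `π` is a linear extension of the poset `α`: `π i < π j` in `α` implies `i < j`. -/
def IsLinExt {α : Type*} [Fintype α] [PartialOrder α] (π : Listing α) : Prop :=
  ∀ i j, π i < π j → i < j

variable {α : Type*} [Fintype α] [PartialOrder α]

/-- The operator `τ_i`: swap positions `i` and `i+1` (0-indexed) of a listing when
the corresponding entries are incomparable. -/
noncomputable def tau (i : ℕ) (π : Listing α) : Listing α :=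
  if h : i + 1 < Fintype.card α then
    if ¬ π ⟨i, by omega⟩ ≤ π ⟨i + 1, h⟩ ∧ ¬ π ⟨i + 1, h⟩ ≤ π ⟨i, by omega⟩ then
      (Equiv.swap (⟨i, by omega⟩ : Fin (Fintype.card α)) ⟨i + 1, h⟩).trans π
    else π
  else π

/-- The extended promotion operator `∂_i = τ_{n-1} ⋯ τ_{i+1} τ_i` (0-indexed). -/
noncomputable def promo (i : ℕ) (π : Listing α) : Listing α :=
  ((List.range (Fintype.card α)).drop i).foldl (fun σ j => tau j σ) π

/-- The set of linear extensions of a finite poset. -/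
def LinExt (α : Type*) [Fintype α] [PartialOrder α] := {π : Listing α // IsLinExt π}

noncomputable instance : Fintype (LinExt α) := by unfold LinExt; infer_instance

noncomputable instance : DecidableEq (LinExt α) := Classical.decEq _

/-- The transition matrix of the promotion Markov chain: the `(π, π')` entry is the
sum of `x (π i)` over all positions `i` with `∂_i π = π'`. -/
noncomputable def promoMatrix (x : α → ℝ) : Matrix (LinExt α) (LinExt α) ℝ :=
  fun π π' => ∑ i : Fin (Fintype.card α), if promo (i : ℕ) π.1 = π'.1 then x (π.1 i) else 0

/-- A discrete (antichain) order on a type. -/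
def Discrete (β : Type*) := β

instance {β : Type*} : PartialOrder (Discrete β) where
  le a b := a = b
  le_refl _ := rfl
  le_trans _ _ _ h h' := Eq.trans h h'
  le_antisymm _ _ h _ := h

instance {β : Type*} [Fintype β] : Fintype (Discrete β) := inferInstanceAs (Fintype β)
instance {β : Type*} [DecidableEq β] : DecidableEq (Discrete β) := inferInstanceAs (DecidableEq β)

instance {β γ : Type*} [Fintype β] [Fintype γ] : Fintype (β ⊕ₗ γ) :=
  inferInstanceAs (Fintype (β ⊕ γ))

/-- A ladder with `k` levels, the `i`-th level an antichain of size `(q i) + 1 ∈ {1, 2}`. -/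
def Ladder (k : ℕ) (q : Fin k → Fin 2) := Σ i : Fin k, Fin ((q i : ℕ) + 1)

instance {k : ℕ} {q : Fin k → Fin 2} : Fintype (Ladder k q) :=
  inferInstanceAs (Fintype (Σ i : Fin k, Fin ((q i : ℕ) + 1)))

instance {k : ℕ} {q : Fin k → Fin 2} : DecidableEq (Ladder k q) :=
  inferInstanceAs (DecidableEq (Σ i : Fin k, Fin ((q i : ℕ) + 1)))

instance {k : ℕ} {q : Fin k → Fin 2} : PartialOrder (Ladder k q) where
  le a b := a.1 < b.1 ∨ a = b
  le_refl _ := Or.inr rfl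
  le_trans := by
    rintro a b c (h | rfl) (h' | rfl)
    · exact Or.inl (h.trans h')
    · exact Or.inl h
    · exact Or.inl h'
    · exact Or.inr rfl
  le_antisymm := by
    rintro a b (h | rfl) (h' | h2)
    · exact ((lt_asymm h) h').elim
    · exact h2.symm
    · rfl
    · rfl

/-- A rooted forest: every element is covered by at most one element
(has at most one successor). -/
def IsRootedForest (α : Type*) [PartialOrder α] : Prop :=
  ∀ a b c : α, a ⋖ b → a ⋖ c → b = c

/-- A finite poset is a ladder if it is order-isomorphic to some `Ladder k q`. -/
def IsLadder (α : Type*) [Fintype α] [PartialOrder α] : Prop :=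
  ∃ (k : ℕ) (q : Fin k → Fin 2), Nonempty (α ≃o Ladder k q)

section Ladder
variable {k : ℕ} {q : Fin k → Fin 2}

/-- sizes of the blocks as a function on ℕ -/
def dd (q : Fin k → Fin 2) (i : ℕ) : ℕ := if h : i < k then (q ⟨i, h⟩ : ℕ) + 1 else 0

/-- cumulative block starts -/
def cc (q : Fin k → Fin 2) (m : ℕ) : ℕ := ∑ i ∈ Finset.range m, dd q i

lemma cc_succ (s : Fin k) : cc q ((s : ℕ) + 1) = cc q s + ((q s : ℕ) + 1) := by
  simp [cc, Finset.sum_range_succ, dd, s.2]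

lemma cc_mono : Monotone (cc q) := fun a b h =>
  Finset.sum_le_sum_of_subset (Finset.range_subset_range.2 h)

lemma cc_card : cc q k = Fintype.card (Ladder k q) := by
  have : Fintype.card (Ladder k q) = ∑ i : Fin k, ((q i : ℕ) + 1) := by
    simp [Ladder, Fintype.card_sigma]
    exact (Fintype.card_sigma ..).trans (by simp)
  rw [this, cc, ← Fin.sum_univ_eq_sum_range (fun i => dd q i) k]
  exact (Finset.sum_congr rfl (fun i _ => by simp [dd, i.2])).symm

lemma cc_lt_card (s : Fin k) (j : Fin ((q s : ℕ) + 1)) :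
    cc q s + (j : ℕ) < Fintype.card (Ladder k q) := by
  have h1 : cc q s + (j : ℕ) < cc q ((s : ℕ) + 1) := by
    rw [cc_succ]; have := j.2; omega
  have h2 : cc q ((s : ℕ) + 1) ≤ cc q k := cc_mono s.2
  rw [cc_card] at h2; omega

lemma cc_block_le {s t : Fin k} (h : s < t) : cc q ((s : ℕ) + 1) ≤ cc q t := cc_mono h

/-- position of element (s, j) -/
def pos (s : Fin k) (j : Fin ((q s : ℕ) + 1)) : Fin (Fintype.card (Ladder k q)) :=
  ⟨cc q s + j, cc_lt_card s j⟩

lemma pos_inj : Function.Injective (fun p : Ladder k q => pos p.1 p.2) := by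
  rintro ⟨s, j⟩ ⟨s', j'⟩ h
  simp only [pos, Fin.mk.injEq] at h
  have hss : s = s' := by
    by_contra hne
    rcases lt_or_gt_of_ne hne with hlt | hlt
    · have h2 := cc_block_le (q := q) hlt
      rw [cc_succ] at h2
      have := j.2; have := j'.2; omega
    · have h2 := cc_block_le (q := q) hlt
      rw [cc_succ] at h2
      have := j.2; have := j'.2; omega
  subst hss
  have : j = j' := Fin.ext (by omega)
  rw [this]

lemma pos_bij : Function.Bijective (fun p : Ladder k q => pos p.1 p.2) := by
  rw [Fintype.bijective_iff_injective_and_card]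
  exact ⟨pos_inj, (Fintype.card_fin _).symm⟩

/-- the canonical block-position equivalence -/
noncomputable def posE : Ladder k q ≃ Fin (Fintype.card (Ladder k q)) :=
  Equiv.ofBijective _ pos_bij

@[simp] lemma posE_apply (s : Fin k) (j : Fin ((q s : ℕ) + 1)) :
    posE ⟨s, j⟩ = pos s j := rfl

lemma posE_symm_pos (s : Fin k) (j : Fin ((q s : ℕ) + 1)) :
    posE.symm (pos s j) = ⟨s, j⟩ := posE.symm_apply_apply ⟨s, j⟩

lemma posE_symm_spec (i : Fin (Fintype.card (Ladder k q))) :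
    (i : ℕ) = cc q (posE.symm i).1 + ((posE.symm i).2 : ℕ) := by
  conv_lhs => rw [← posE.apply_symm_apply i]
  rcases posE.symm i with ⟨s, j⟩
  rfl

end Ladder
-- Fin helpers
lemma fin_one_eq {m : ℕ} (hm : m = 0) (a b : Fin (m + 1)) : a = b := by subst hm; revert a b; decide
lemma fin_one_rev {m : ℕ} (hm : m = 0) (a : Fin (m + 1)) : a.rev = a := by subst hm; revert a; decide
lemma fin_add_zero {m : ℕ} (a : Fin (m + 1)) : a + ⟨0, Nat.succ_pos m⟩ = a := by
  apply Fin.ext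
  rw [Fin.add_def]
  simp [Nat.mod_eq_of_lt a.2]
lemma fin_two_cases {m : ℕ} (hm : m = 1) (a : Fin (m + 1)) :
    a = ⟨0, by omega⟩ ∨ a = ⟨1, by omega⟩ := by
  subst hm; revert a; decide
lemma fin_two_rev {m : ℕ} (hm : m = 1) (a : Fin (m + 1)) : a.rev = a + ⟨1, by omega⟩ := by
  subst hm; revert a; decide
lemma fin_two_ne {m : ℕ} (hm : m = 1) (a : Fin (m + 1)) : a ≠ a + ⟨1, by omega⟩ := by
  subst hm; revert a; decide
lemma fin_two_add_add {m : ℕ} (hm : m = 1) (a : Fin (m + 1)) :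
    a + ⟨1, by omega⟩ + ⟨1, by omega⟩ = a := by
  subst hm; revert a; decide
lemma fin_two_of_ne {m : ℕ} (hm : m = 1) (a b : Fin (m + 1)) (h : a ≠ b) :
    a = b + ⟨1, by omega⟩ := by
  subst hm; revert a b; decide

section Ladder2
variable {k : ℕ} {q : Fin k → Fin 2}

lemma ladder_le_iff (a b : Ladder k q) : a ≤ b ↔ a.1 < b.1 ∨ a = b := Iff.rfl

lemma ladder_lt_level {a b : Ladder k q} (h : a < b) : a.1 < b.1 := by
  rcases h.1 with h1 | rfl
  · exact h1
  · exact absurd (Or.inr rfl) h.2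

/-- the listing associated to a choice function -/
noncomputable def mk (f : ∀ s : Fin k, Fin ((q s : ℕ) + 1)) : Listing (Ladder k q) :=
  posE.symm.trans (Equiv.sigmaCongrRight fun s => Equiv.addLeft (f s))

lemma mk_apply (f : ∀ s : Fin k, Fin ((q s : ℕ) + 1)) (i : Fin (Fintype.card (Ladder k q))) :
    mk f i = ⟨(posE.symm i).1, f (posE.symm i).1 + (posE.symm i).2⟩ := by
  show (Equiv.sigmaCongrRight fun s => Equiv.addLeft (f s)) (posE.symm i) = _
  rcases h : posE.symm i with ⟨s, j⟩
  rfl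

lemma mk_pos (f : ∀ s : Fin k, Fin ((q s : ℕ) + 1)) (s : Fin k) (j : Fin ((q s : ℕ) + 1)) :
    mk f (pos s j) = ⟨s, f s + j⟩ := by
  rw [mk_apply, posE_symm_pos]

lemma level_lt_pos {i i' : Fin (Fintype.card (Ladder k q))}
    (h : (posE.symm i).1 < (posE.symm i').1) : i < i' := by
  have h1 := posE_symm_spec i
  have h2 := posE_symm_spec i'
  have h3 := cc_block_le (q := q) h
  rw [cc_succ] at h3
  have := ((posE.symm i).2).2
  have : (i : ℕ) < (i' : ℕ) := by omega
  exact this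

lemma level_mono {i i' : Fin (Fintype.card (Ladder k q))} (h : i ≤ i') :
    (posE.symm i).1 ≤ (posE.symm i').1 := by
  by_contra hc
  push_neg at hc
  exact absurd h (not_le.2 (level_lt_pos hc))

lemma mk_isLinExt (f : ∀ s : Fin k, Fin ((q s : ℕ) + 1)) : IsLinExt (mk f) := by
  intro i j h
  have := ladder_lt_level h
  rw [mk_apply, mk_apply] at this
  exact level_lt_pos this

lemma mk_inj : Function.Injective (mk (k := k) (q := q)) := by
  intro f f' h
  funext s
  have h0 : mk f (pos s ⟨0, Nat.succ_pos _⟩) = mk f' (pos s ⟨0, Nat.succ_pos _⟩) := by rw [h]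
  rw [mk_pos, mk_pos, fin_add_zero, fin_add_zero] at h0
  have h1 : (⟨s, f s⟩ : Σ s : Fin k, Fin ((q s : ℕ) + 1)) = ⟨s, f' s⟩ := h0
  simpa using h1

end Ladder2

section Ladder3
variable {k : ℕ} {q : Fin k → Fin 2}

lemma tau_mk_of_not (f : ∀ s : Fin k, Fin ((q s : ℕ) + 1)) (i : ℕ)
    (hI : ∀ s : Fin k, ¬((q s : ℕ) = 1 ∧ cc q s = i)) :
    tau i (mk f) = mk f := by
  unfold tau
  split
  case isFalse => rfl
  case isTrue h =>
    rw [if_neg]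
    rintro ⟨h1, h2⟩
    set i0 : Fin (Fintype.card (Ladder k q)) := ⟨i, by omega⟩ with hi0
    set i1 : Fin (Fintype.card (Ladder k q)) := ⟨i + 1, h⟩ with hi1
    have hle : i0 ≤ i1 := by simp [hi0, hi1, Fin.le_def]
    have hs := level_mono hle
    rcases lt_or_eq_of_le hs with hlt | heq
    · apply h1
      left
      rw [mk_apply, mk_apply]
      exact hlt
    · have e0 := posE_symm_spec i0
      have e1 := posE_symm_spec i1
      have hv0 : (i0 : ℕ) = i := rfl
      have hv1 : (i1 : ℕ) = i + 1 := rfl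
      rw [hv0] at e0
      rw [hv1] at e1
      have hcc : cc q (posE.symm i0).1 = cc q (posE.symm i1).1 := by rw [heq]
      have hj1 := ((posE.symm i1).2).2
      have hq2 := (q (posE.symm i0).1).2
      have hqeq : (q (posE.symm i0).1 : ℕ) = (q (posE.symm i1).1 : ℕ) := by rw [heq]
      apply hI (posE.symm i0).1
      constructor <;> omega
  done

lemma tau_mk_swap (f : ∀ s : Fin k, Fin ((q s : ℕ) + 1)) (s : Fin k) (hq : (q s : ℕ) = 1) :
    tau (cc q s) (mk f) = mk (Function.update f s (f s).rev) := by
  have hlt : cc q s + 1 < Fintype.card (Ladder k q) := by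
    have := cc_lt_card s (⟨1, by omega⟩ : Fin ((q s : ℕ) + 1)); simpa using this
  set j0 : Fin ((q s : ℕ) + 1) := ⟨0, by omega⟩ with hj0
  set j1 : Fin ((q s : ℕ) + 1) := ⟨1, by omega⟩ with hj1
  have hp0 : (⟨cc q s, by omega⟩ : Fin (Fintype.card (Ladder k q))) = pos s j0 := by
    apply Fin.ext; simp [pos, hj0]
  have hp1 : (⟨cc q s + 1, hlt⟩ : Fin (Fintype.card (Ladder k q))) = pos s j1 := by
    apply Fin.ext; simp [pos, hj1]
  have hne : (⟨s, f s⟩ : Ladder k q) ≠ ⟨s, f s + j1⟩ := by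
    intro hcon
    have : f s = f s + j1 := by
      have h1 : (⟨s, f s⟩ : Σ s : Fin k, Fin ((q s : ℕ) + 1)) = ⟨s, f s + j1⟩ := hcon
      simpa using h1
    exact fin_two_ne hq (f s) this
  have key0 : mk f (pos s j0) = ⟨s, f s⟩ := by rw [mk_pos, fin_add_zero]
  have key1 : mk f (pos s j1) = ⟨s, f s + j1⟩ := mk_pos f s j1
  unfold tau
  rw [dif_pos hlt]
  rw [if_pos]
  swap
  · constructor
    · rw [hp0, hp1, key0, key1]
      rintro (hl | he)
      · exact lt_irrefl _ hl
      · exact hne he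
    · rw [hp0, hp1, key0, key1]
      rintro (hl | he)
      · exact lt_irrefl _ hl
      · exact hne he.symm
  · apply Equiv.ext
    intro i
    obtain ⟨⟨s', j'⟩, rfl⟩ : ∃ p : Ladder k q, posE p = i := ⟨posE.symm i, posE.apply_symm_apply i⟩
    have hposE : posE (⟨s', j'⟩ : Ladder k q) = pos s' j' := rfl
    rw [hposE, Equiv.trans_apply, hp0, hp1]
    by_cases hss : s' = s
    · subst hss
      rcases fin_two_cases hq j' with rfl | rfl
      · rw [show (⟨0, by omega⟩ : Fin ((q s' : ℕ) + 1)) = j0 from rfl, Equiv.swap_apply_left,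
          key1, mk_pos]
        have : Function.update f s' (f s').rev s' + j0 = f s' + j1 := by
          rw [Function.update_self, fin_add_zero, fin_two_rev hq]
        rw [this]
      · rw [show (⟨1, by omega⟩ : Fin ((q s' : ℕ) + 1)) = j1 from rfl, Equiv.swap_apply_right,
          key0, mk_pos]
        have : Function.update f s' (f s').rev s' + j1 = f s' := by
          rw [Function.update_self, fin_two_rev hq, fin_two_add_add hq]
        rw [this]
    · have hne0 : pos s' j' ≠ pos s j0 := by
        intro hcon
        have h2 : (⟨s', j'⟩ : Ladder k q) = ⟨s, j0⟩ := pos_inj hcon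
        exact hss (congrArg (fun p : Ladder k q => p.1) h2)
      have hne1 : pos s' j' ≠ pos s j1 := by
        intro hcon
        have h2 : (⟨s', j'⟩ : Ladder k q) = ⟨s, j1⟩ := pos_inj hcon
        exact hss (congrArg (fun p : Ladder k q => p.1) h2)
      rw [Equiv.swap_apply_of_ne_of_ne hne0 hne1, mk_pos, mk_pos,
        Function.update_of_ne hss]

end Ladder3

section Promo
variable {α : Type*} [Fintype α] [PartialOrder α]

lemma promo_step (i : ℕ) (h : i < Fintype.card α) (π : Listing α) :
    promo i π = promo (i + 1) (tau i π) := by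
  unfold promo
  rw [List.drop_eq_getElem_cons (by simpa using h), List.getElem_range]
  rfl

lemma promo_ge (i : ℕ) (h : Fintype.card α ≤ i) (π : Listing α) : promo i π = π := by
  unfold promo
  rw [List.drop_eq_nil_of_le (by simpa using h)]
  rfl

end Promo

section Ladder4
variable {k : ℕ} {q : Fin k → Fin 2}

lemma cc_strict {s' s : Fin k} (h : s' < s) : cc q s' < cc q s := by
  have h1 := cc_succ (q := q) s'
  have h2 := cc_block_le (q := q) h
  omega

lemma cc_lt_card' (s : Fin k) : cc q s < Fintype.card (Ladder k q) := by
  have := cc_lt_card s (⟨0, Nat.succ_pos _⟩ : Fin ((q s : ℕ) + 1))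
  simpa using this

lemma promo_mk_of_ge (i : ℕ) (hi : Fintype.card (Ladder k q) ≤ i)
    (f : ∀ s : Fin k, Fin ((q s : ℕ) + 1)) :
    promo i (mk f) = mk (fun s => if i ≤ cc q s then (f s).rev else f s) := by
  rw [promo_ge i hi]
  have : (fun (s : Fin k) => if i ≤ cc q s then (f s).rev else f s) = f := by
    funext s
    rw [if_neg]
    have := cc_lt_card' (q := q) s
    omega
  rw [this]

lemma promo_mk_aux : ∀ (m i : ℕ), Fintype.card (Ladder k q) ≤ i + m →
    ∀ f : ∀ s : Fin k, Fin ((q s : ℕ) + 1),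
    promo i (mk f) = mk (fun s => if i ≤ cc q s then (f s).rev else f s) := by
  intro m
  induction m with
  | zero => intro i hi f; exact promo_mk_of_ge i (by omega) f
  | succ m ih =>
    intro i hi f
    by_cases hiN : i < Fintype.card (Ladder k q)
    · by_cases hex : ∃ s : Fin k, (q s : ℕ) = 1 ∧ cc q s = i
      · obtain ⟨s, hq, hcs⟩ := hex
        subst hcs
        rw [promo_step _ hiN, tau_mk_swap f s hq, ih (cc q s + 1) (by omega)]
        congr 1
        funext s'
        by_cases hss : s' = s
        · subst hss
          rw [if_neg (by omega), if_pos le_rfl, Function.update_self]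
        · rw [Function.update_of_ne hss]
          have hccne : cc q s' ≠ cc q s := by
            rcases lt_or_gt_of_ne hss with h | h
            · exact (cc_strict h).ne
            · exact (cc_strict h).ne'
          by_cases hle : cc q s + 1 ≤ cc q s'
          · rw [if_pos hle, if_pos (by omega)]
          · rw [if_neg hle, if_neg (by omega)]
      · push_neg at hex
        rw [promo_step _ hiN, tau_mk_of_not f i (fun s h => hex s h.1 h.2),
          ih (i + 1) (by omega)]
        congr 1
        funext s
        by_cases hcs : cc q s = i
        · have hq0 : (q s : ℕ) = 0 := by
            have := (q s).2
            have := hex s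
            omega
          subst hcs
          rw [if_pos le_rfl, if_neg (by omega), fin_one_rev hq0]
        · by_cases hle : i ≤ cc q s
          · rw [if_pos hle, if_pos (by omega)]
          · rw [if_neg hle, if_neg (by omega)]
    · exact promo_mk_of_ge i (by omega) f

lemma promo_mk (i : ℕ) (f : ∀ s : Fin k, Fin ((q s : ℕ) + 1)) :
    promo i (mk f) = mk (fun s => if i ≤ cc q s then (f s).rev else f s) :=
  promo_mk_aux (Fintype.card (Ladder k q)) i (by omega) f

end Ladder4

section Equiv
variable {k : ℕ} {q : Fin k → Fin 2}

lemma lower_subset {β : Type*} [LinearOrder β] {S T : Finset β}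
    (hS : ∀ a ∈ S, ∀ b, b ≤ a → b ∈ S) (hT : ∀ a ∈ T, ∀ b, b ≤ a → b ∈ T)
    (hcard : T.card ≤ S.card) : T ⊆ S := by
  classical
  intro a ha
  by_contra haS
  have hsub : S ⊆ T.erase a := by
    intro b hb
    have hba : b ≤ a := by
      by_contra hab
      push_neg at hab
      exact haS (hS b hb a hab.le)
    have hbT : b ∈ T := hT a ha b hba
    exact Finset.mem_erase.2 ⟨fun hc => haS (hc ▸ hb), hbT⟩
  have h1 := Finset.card_le_card hsub
  have h2 := Finset.card_erase_of_mem ha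
  have h3 : 1 ≤ T.card := Finset.card_pos.2 ⟨a, ha⟩
  omega

lemma lower_eq {β : Type*} [LinearOrder β] {S T : Finset β}
    (hS : ∀ a ∈ S, ∀ b, b ≤ a → b ∈ S) (hT : ∀ a ∈ T, ∀ b, b ≤ a → b ∈ T)
    (hcard : S.card = T.card) : S = T :=
  Finset.Subset.antisymm (lower_subset hT hS hcard.le) (lower_subset hS hT hcard.ge)

lemma card_filter_equiv {γ δ : Type*} [Fintype γ] [Fintype δ] (E : γ ≃ δ) (p : δ → Prop)
    [DecidablePred p] :
    (Finset.univ.filter fun x => p (E x)).card = (Finset.univ.filter p).card := by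
  apply Finset.card_bij (fun a _ => E a)
  · intro a ha
    simp only [Finset.mem_filter, Finset.mem_univ, true_and] at ha ⊢
    exact ha
  · intro a _ b _ h
    exact E.injective h
  · intro b hb
    refine ⟨E.symm b, ?_, by simp⟩
    simp only [Finset.mem_filter, Finset.mem_univ, true_and] at hb ⊢
    simpa using hb

lemma linext_level_mono {π : Listing (Ladder k q)} (hπ : IsLinExt π)
    {a b : Fin (Fintype.card (Ladder k q))} (hab : a ≤ b) : (π a).1 ≤ (π b).1 := by
  by_contra hc
  push_neg at hc
  have hlt : π b < π a := by
    constructor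
    · exact Or.inl hc
    · rintro (h | h)
      · exact absurd (lt_trans h hc) (lt_irrefl _)
      · rw [h] at hc; exact absurd hc (lt_irrefl _)
  exact absurd (hπ _ _ hlt) (not_lt.2 hab)

lemma linext_level {π : Listing (Ladder k q)} (hπ : IsLinExt π)
    (i : Fin (Fintype.card (Ladder k q))) : (π i).1 = (posE.symm i).1 := by
  have key : ∀ s : Fin k,
      (Finset.univ.filter fun i : Fin (Fintype.card (Ladder k q)) => (π i).1 ≤ s) =
      (Finset.univ.filter fun i => (posE.symm i).1 ≤ s) := by
    intro s
    apply lower_eq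
    · intro a ha b hba
      simp only [Finset.mem_filter, Finset.mem_univ, true_and] at ha ⊢
      exact le_trans (linext_level_mono hπ hba) ha
    · intro a ha b hba
      simp only [Finset.mem_filter, Finset.mem_univ, true_and] at ha ⊢
      exact le_trans (level_mono hba) ha
    · exact (card_filter_equiv π (fun a : Ladder k q => a.1 ≤ s)).trans
        (card_filter_equiv posE.symm (fun a : Ladder k q => a.1 ≤ s)).symm
  have h1 : ∀ s : Fin k, (π i).1 ≤ s ↔ (posE.symm i).1 ≤ s := by
    intro s
    constructor
    · intro h
      have := key s
      have hmem : i ∈ (Finset.univ.filter fun i : Fin (Fintype.card (Ladder k q)) => (π i).1 ≤ s) := by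
        simp [h]
      rw [this] at hmem
      simpa using hmem
    · intro h
      have := key s
      have hmem : i ∈ (Finset.univ.filter fun i : Fin (Fintype.card (Ladder k q)) => (posE.symm i).1 ≤ s) := by
        simp [h]
      rw [← this] at hmem
      simpa using hmem
  exact le_antisymm ((h1 _).2 le_rfl) ((h1 _).1 le_rfl)

lemma ladder_cases (s : Fin k) (a : Ladder k q) (h : a.1 = s) :
    ∃ y : Fin ((q s : ℕ) + 1), a = ⟨s, y⟩ := by
  rcases a with ⟨s2, y⟩
  have h2 : s2 = s := h
  subst h2
  exact ⟨y, rfl⟩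

lemma snd_eq_of_mk_eq {s : Fin k} {y y' : Fin ((q s : ℕ) + 1)}
    (h : (⟨s, y⟩ : Ladder k q) = ⟨s, y'⟩) : y = y' := by
  have h1 : (⟨s, y⟩ : Σ s : Fin k, Fin ((q s : ℕ) + 1)) = ⟨s, y'⟩ := h
  simpa using h1

lemma mk_surj {π : Listing (Ladder k q)} (hπ : IsLinExt π) : ∃ f, mk f = π := by
  have H : ∀ s : Fin k, ∃ y : Fin ((q s : ℕ) + 1),
      π (pos s ⟨0, Nat.succ_pos _⟩) = ⟨s, y⟩ := by
    intro s
    apply ladder_cases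
    rw [linext_level hπ, posE_symm_pos]
  choose f hf using H
  refine ⟨f, ?_⟩
  apply Equiv.ext
  intro i
  obtain ⟨⟨s, j⟩, rfl⟩ : ∃ p : Ladder k q, posE p = i := ⟨posE.symm i, posE.apply_symm_apply i⟩
  have hposE : posE (⟨s, j⟩ : Ladder k q) = pos s j := rfl
  rw [hposE, mk_pos]
  have hlev : (π (pos s j)).1 = s := by rw [linext_level hπ, posE_symm_pos]
  obtain ⟨y, hy⟩ := ladder_cases s _ hlev
  rw [hy]
  suffices hsuff : f s + j = y by rw [hsuff]
  by_cases hj : (j : ℕ) = 0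
  · have hj0 : j = ⟨0, Nat.succ_pos _⟩ := Fin.ext hj
    rw [hj0, fin_add_zero]
    rw [hj0] at hy
    exact (snd_eq_of_mk_eq (hy.symm.trans (hf s))).symm
  · have hq : (q s : ℕ) = 1 := by have := j.2; have := (q s).2; omega
    have hj1 : j = (⟨1, by omega⟩ : Fin ((q s : ℕ) + 1)) := by
      apply Fin.ext
      show (j : ℕ) = 1
      have := j.2
      omega
    have hne : y ≠ f s := by
      intro hcon
      have hπne : π (pos s j) = π (pos s ⟨0, Nat.succ_pos _⟩) := by
        rw [hy, hf s, hcon]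
      have := π.injective hπne
      have hval : cc q s + (j : ℕ) = cc q s + 0 := congrArg Fin.val this
      omega
    rw [fin_two_of_ne hq y (f s) hne, hj1]
end Equiv

section Final
variable {k : ℕ} {q : Fin k → Fin 2}

lemma ite_inst {p : Prop} {i1 i2 : Decidable p} (a b : ℝ) : @ite _ p i1 a b = @ite _ p i2 a b := by
  cases i1 <;> cases i2 <;> first | rfl | (exfalso; (first | exact ‹¬p› ‹p›))

lemma fin_sum_one {m : ℕ} (hm : m = 0) (F : Fin (m + 1) → ℝ) :
    ∑ j, F j = F ⟨0, Nat.succ_pos m⟩ := by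
  subst hm
  exact Fin.sum_univ_one F

lemma fin_sum_two {m : ℕ} (hm : m = 1) (F : Fin (m + 1) → ℝ) :
    ∑ j, F j = F ⟨0, by omega⟩ + F ⟨1, by omega⟩ := by
  subst hm
  exact Fin.sum_univ_two F

lemma fin_two_sum {m : ℕ} (hm : m = 1) (a b : Fin (m + 1)) (G : Fin (m + 1) → ℝ) :
    (if a.rev = b then G (a + ⟨0, by omega⟩) else 0) +
      (if a = b then G (a + ⟨1, by omega⟩) else 0) = G b.rev := by
  subst hm
  fin_cases a <;> fin_cases b <;> simp [Fin.rev] <;> norm_num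

/-- the sum over a block -/
lemma diag_sum (x : Ladder k q → ℝ) (t : Fin k) (a b : Fin ((q t : ℕ) + 1)) :
    ∑ j : Fin ((q t : ℕ) + 1),
      (if (if (j : ℕ) = 0 then a.rev else a) = b then x ⟨t, a + j⟩ else 0)
      = x ⟨t, b.rev⟩ := by
  have hq2 := (q t).2
  by_cases hq : (q t : ℕ) = 0
  · rw [fin_sum_one hq]
    have e0 : (if ((⟨0, Nat.succ_pos _⟩ : Fin ((q t : ℕ) + 1)) : ℕ) = 0 then a.rev else a)
        = a.rev := if_pos rfl
    rw [e0, if_pos (fin_one_eq hq a.rev b), fin_add_zero, fin_one_eq hq a b.rev]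
  · have hq1 : (q t : ℕ) = 1 := by omega
    rw [fin_sum_two hq1]
    have e0 : (if ((⟨0, by omega⟩ : Fin ((q t : ℕ) + 1)) : ℕ) = 0 then a.rev else a)
        = a.rev := if_pos rfl
    have h10 : ((⟨1, by omega⟩ : Fin ((q t : ℕ) + 1)) : ℕ) ≠ 0 := by simp
    have e1 : (if ((⟨1, by omega⟩ : Fin ((q t : ℕ) + 1)) : ℕ) = 0 then a.rev else a)
        = a := if_neg h10
    rw [e0, e1]
    exact fin_two_sum hq1 a b (fun y => x ⟨t, y⟩)

noncomputable def choiceFun : (∀ s : Fin k, Fin ((q s : ℕ) + 1)) → LinExt (Ladder k q) :=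
  fun f => ⟨mk f, mk_isLinExt f⟩

lemma choiceFun_bij : Function.Bijective (choiceFun (k := k) (q := q)) := by
  constructor
  · intro f f' h
    exact mk_inj (congrArg Subtype.val h)
  · intro π
    obtain ⟨f, hf⟩ := mk_surj π.2
    exact ⟨f, Subtype.ext hf⟩

noncomputable def choiceEquiv : LinExt (Ladder k q) ≃ (∀ s : Fin k, Fin ((q s : ℕ) + 1)) :=
  (Equiv.ofBijective choiceFun choiceFun_bij).symm

lemma mk_choiceEquiv (π : LinExt (Ladder k q)) : mk (choiceEquiv π) = π.1 :=
  congrArg Subtype.val ((Equiv.ofBijective choiceFun choiceFun_bij).apply_symm_apply π)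

lemma cond_iff (f f' : ∀ s : Fin k, Fin ((q s : ℕ) + 1)) (t : Fin k)
    (j : Fin ((q t : ℕ) + 1)) :
    (promo (cc q t + (j : ℕ)) (mk f) = mk f') ↔
      ((∀ s ∈ Finset.univ.erase t,
          (if s < t then f s = f' s else f s = (f' s).rev)) ∧
        (if (j : ℕ) = 0 then (f t).rev else f t) = f' t) := by
  rw [promo_mk, mk_inj.eq_iff, funext_iff]
  constructor
  · intro h
    constructor
    · intro s hs
      have hst : s ≠ t := (Finset.mem_erase.1 hs).1
      rcases lt_or_gt_of_ne hst with hlt | hgt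
      · rw [if_pos hlt]
        have hc : ¬ (cc q t + (j : ℕ) ≤ cc q s) := by
          have := cc_strict (q := q) hlt
          omega
        have := h s
        rw [if_neg hc] at this
        exact this
      · rw [if_neg (not_lt.2 hgt.le)]
        have hc : cc q t + (j : ℕ) ≤ cc q s := by
          have h1 := cc_succ (q := q) t
          have h2 := cc_block_le (q := q) hgt
          have := j.2
          omega
        have := h s
        rw [if_pos hc] at this
        rw [← this, Fin.rev_rev]
    · have := h t
      by_cases hj : (j : ℕ) = 0
      · rw [if_pos (by omega)] at this
        rw [if_pos hj]
        exact this
      · rw [if_neg (by omega)] at this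
        rw [if_neg hj]
        exact this
  · rintro ⟨h1, h2⟩ s
    by_cases hst : s = t
    · subst hst
      by_cases hj : (j : ℕ) = 0
      · rw [if_pos (by omega)]
        rw [if_pos hj] at h2
        exact h2
      · rw [if_neg (by omega)]
        rw [if_neg hj] at h2
        exact h2
    · have hD := h1 s (Finset.mem_erase.2 ⟨hst, Finset.mem_univ s⟩)
      rcases lt_or_gt_of_ne hst with hlt | hgt
      · rw [if_pos hlt] at hD
        rw [if_neg (by have := cc_strict (q := q) hlt; omega)]
        exact hD
      · rw [if_neg (not_lt.2 hgt.le)] at hD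
        rw [if_pos (by
          have h1' := cc_succ (q := q) t
          have h2' := cc_block_le (q := q) hgt
          have := j.2
          omega)]
        rw [hD, Fin.rev_rev]


end Final

set_option maxHeartbeats 1000000 in
/-- For a ladder `P = Q_1 ⊕ ⋯ ⊕ Q_k` (level `s` of size `(q s)+1`),
the promotion transition matrix is the sum over `t` of the Kronecker products
`I_{|Q_1|} ⊗ ⋯ ⊗ I_{|Q_{t-1}|} ⊗ B_t ⊗ J_{|Q_{t+1}|} ⊗ ⋯ ⊗ J_{|Q_k|}` (for a
suitable ordering of the linear extensions).  Here the Kronecker product is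
written entrywise: its `(f, g)` entry is the product over `s` of the `(f s, g s)`
entries of the factors; `B_s` is the matrix of the level-`s` antichain, with all
rows equal to `(x_{b_s}, x_{a_s})` (entry `x ⟨s, (g s).rev⟩`), and `J` is the
anti-diagonal matrix of ones. -/
theorem stmt3 (k : ℕ) (q : Fin k → Fin 2) (x : Ladder k q → ℝ) :
    ∃ e : LinExt (Ladder k q) ≃ (∀ i : Fin k, Fin ((q i : ℕ) + 1)),
      ∀ π π', promoMatrix x π π' =
        ∑ t : Fin k, ∏ s : Fin k,
          (if s < t then (if e π s = e π' s then (1 : ℝ) else 0)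
           else if s = t then x ⟨s, (e π' s).rev⟩
           else if e π s = (e π' s).rev then 1 else 0) := by
  refine ⟨choiceEquiv, ?_⟩
  intro π π'
  set f := choiceEquiv π with hf
  set f' := choiceEquiv π' with hf'
  have hπ : π.1 = mk f := (mk_choiceEquiv π).symm
  have hπ' : π'.1 = mk f' := (mk_choiceEquiv π').symm
  unfold promoMatrix
  rw [hπ, hπ']
  refine Eq.trans (b := ∑ i : Fin (Fintype.card (Ladder k q)),
      if promo (i : ℕ) (mk f) = mk f' then x (mk f i) else 0)
    (Finset.sum_congr rfl fun i _ => ite_inst _ _) ?_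
  have hsum : (∑ p : Σ s : Fin k, Fin ((q s : ℕ) + 1),
      if promo ((pos p.1 p.2 : Fin (Fintype.card (Ladder k q))) : ℕ) (mk f) = mk f' then
        x (mk f (pos p.1 p.2)) else 0) =
      ∑ i : Fin (Fintype.card (Ladder k q)),
        if promo (i : ℕ) (mk f) = mk f' then x (mk f i) else 0 :=
    Fintype.sum_bijective
      (fun p : Σ s : Fin k, Fin ((q s : ℕ) + 1) => pos p.1 p.2)
      pos_bij _ _ (fun p => rfl)
  rw [← hsum]
  rw [← Finset.univ_sigma_univ, Finset.sum_sigma]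
  apply Finset.sum_congr rfl
  intro t _
  have hval : ∀ j : Fin ((q t : ℕ) + 1),
      ((pos t j : Fin (Fintype.card (Ladder k q))) : ℕ) = cc q t + (j : ℕ) := fun j => rfl
  calc ∑ j : Fin ((q t : ℕ) + 1),
        (if promo ((pos t j : Fin (Fintype.card (Ladder k q))) : ℕ) (mk f) = mk f' then
          x (mk f (pos t j)) else 0)
      = ∑ j : Fin ((q t : ℕ) + 1),
        (if (∀ s ∈ Finset.univ.erase t, (if s < t then f s = f' s else f s = (f' s).rev))
            then 1 else 0) *
        (if (if (j : ℕ) = 0 then (f t).rev else f t) = f' t then x ⟨t, f t + j⟩ else 0) := by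
        apply Finset.sum_congr rfl
        intro j _
        rw [hval j, mk_pos, if_congr (cond_iff f f' t j) rfl rfl]
        by_cases hA : (∀ s ∈ Finset.univ.erase t, (if s < t then f s = f' s else f s = (f' s).rev))
        · rw [if_pos hA, one_mul]
          by_cases hB : (if (j : ℕ) = 0 then (f t).rev else f t) = f' t
          · rw [if_pos hB, if_pos ⟨hA, hB⟩]
          · rw [if_neg hB, if_neg (fun hc => hB hc.2)]
        · rw [if_neg hA, zero_mul, if_neg (fun hc => hA hc.1)]
    _ = (if (∀ s ∈ Finset.univ.erase t, (if s < t then f s = f' s else f s = (f' s).rev))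
            then (1 : ℝ) else 0) * x ⟨t, (f' t).rev⟩ := by
        rw [← Finset.mul_sum, diag_sum x t (f t) (f' t)]
    _ = (∏ s ∈ Finset.univ.erase t,
          (if s < t then (if f s = f' s then (1 : ℝ) else 0)
           else if s = t then x ⟨s, (f' s).rev⟩
           else if f s = (f' s).rev then 1 else 0)) * x ⟨t, (f' t).rev⟩ := by
        congr 1
        by_cases hA : ∀ s ∈ Finset.univ.erase t, (if s < t then f s = f' s else f s = (f' s).rev)
        · rw [if_pos hA]
          symm
          apply Finset.prod_eq_one
          intro s hs
          have hD := hA s hs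
          have hst : s ≠ t := (Finset.mem_erase.1 hs).1
          by_cases hlt : s < t
          · rw [if_pos hlt] at hD
            rw [if_pos hlt, if_pos hD]
          · rw [if_neg hlt] at hD
            rw [if_neg hlt, if_neg hst, if_pos hD]
        · rw [if_neg hA]
          push_neg at hA
          obtain ⟨s, hs, hD⟩ := hA
          symm
          apply Finset.prod_eq_zero hs
          have hst : s ≠ t := (Finset.mem_erase.1 hs).1
          by_cases hlt : s < t
          · rw [if_pos hlt] at hD
            rw [if_pos hlt, if_neg hD]
          · rw [if_neg hlt] at hD
            rw [if_neg hlt, if_neg hst, if_neg hD]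
    _ = ∏ s : Fin k,
          (if s < t then (if f s = f' s then (1 : ℝ) else 0)
           else if s = t then x ⟨s, (f' s).rev⟩
           else if f s = (f' s).rev then 1 else 0) := by
        rw [mul_comm, ← Finset.mul_prod_erase Finset.univ _ (Finset.mem_univ t)]
        congr 1
        rw [if_neg (lt_irrefl t), if_pos rfl]


end PromoMC
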